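/- Let A := c · O⁻¹ R⁻¹ O K O, where c ∈ ℂ is purely imaginary nonzero, O is an invertible real diagonal matrix, and R, K are commuting Hermitian positive definite matrices. Then A is similar to i times a Hermitian matrix, and hence all eigenvalues of A are purely imaginary. -/

import Mathlib

open scoped ComplexOrder
open Matrix

noncomputable def Matrix.PosSemidef.sqrt {n : ℕ} {A : Matrix (Fin n) (Fin n) ℂ}
    (hA : A.PosSemidef) : Matrix (Fin n) (Fin n) ℂ :=
  hA.1.eigenvectorUnitary.1 * Matrix.diagonal ((↑) ∘ Real.sqrt ∘ hA.1.eigenvalues) *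
    (star hA.1.eigenvectorUnitary : Matrix (Fin n) (Fin n) ℂ)

lemma Matrix.PosSemidef.sqrt_mul_self {n : ℕ} {A : Matrix (Fin n) (Fin n) ℂ}
    (hA : A.PosSemidef) : hA.sqrt * hA.sqrt = A := by
  have hU2 : star hA.1.eigenvectorUnitary.1 * hA.1.eigenvectorUnitary.1 = 1 :=
    (Matrix.mem_unitaryGroup_iff').mp hA.1.eigenvectorUnitary.2
  have hd : Matrix.diagonal ((↑) ∘ Real.sqrt ∘ hA.1.eigenvalues) *
      Matrix.diagonal ((↑) ∘ Real.sqrt ∘ hA.1.eigenvalues) =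
      Matrix.diagonal (((↑) ∘ hA.1.eigenvalues) : Fin n → ℂ) := by
    rw [Matrix.diagonal_mul_diagonal]
    congr 1
    funext i
    simp only [Function.comp_apply]
    rw [← Complex.ofReal_mul, Real.mul_self_sqrt (hA.eigenvalues_nonneg i)]
  have hspec : A = hA.1.eigenvectorUnitary.1 *
      Matrix.diagonal (((↑) ∘ hA.1.eigenvalues) : Fin n → ℂ) *
      star hA.1.eigenvectorUnitary.1 := hA.1.spectral_theorem
  simp only [Matrix.PosSemidef.sqrt]
  calc _ = hA.1.eigenvectorUnitary.1 * Matrix.diagonal ((↑) ∘ Real.sqrt ∘ hA.1.eigenvalues) *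
      (star hA.1.eigenvectorUnitary.1 * hA.1.eigenvectorUnitary.1) *
      Matrix.diagonal ((↑) ∘ Real.sqrt ∘ hA.1.eigenvalues) *
      star hA.1.eigenvectorUnitary.1 := by simp only [Matrix.mul_assoc]
    _ = hA.1.eigenvectorUnitary.1 * (Matrix.diagonal ((↑) ∘ Real.sqrt ∘ hA.1.eigenvalues) *
      Matrix.diagonal ((↑) ∘ Real.sqrt ∘ hA.1.eigenvalues)) *
      star hA.1.eigenvectorUnitary.1 := by rw [hU2, Matrix.mul_one]; simp only [Matrix.mul_assoc]
    _ = A := by rw [hd]; exact hspec.symm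

lemma Matrix.PosSemidef.posSemidef_sqrt {n : ℕ} {A : Matrix (Fin n) (Fin n) ℂ}
    (hA : A.PosSemidef) : hA.sqrt.PosSemidef := by
  have h := (Matrix.PosSemidef.diagonal (R := ℂ) (n := Fin n)
    (d := (↑) ∘ Real.sqrt ∘ hA.1.eigenvalues) (fun i => by
      simp only [Function.comp_apply, Pi.zero_apply]
      exact_mod_cast Real.sqrt_nonneg _)).mul_mul_conjTranspose_same
    hA.1.eigenvectorUnitary.1
  simpa [Matrix.PosSemidef.sqrt, Matrix.star_eq_conjTranspose] using h

lemma commute_sqrt_of_commute {n : ℕ} {R K : Matrix (Fin n) (Fin n) ℂ}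
    (hR : R.PosSemidef) (h : K * R = R * K) :
    K * hR.sqrt = hR.sqrt * K := by
  set U : Matrix (Fin n) (Fin n) ℂ := hR.1.eigenvectorUnitary.1 with hUdef
  have hU1 : U * star U = 1 := (Matrix.mem_unitaryGroup_iff).mp hR.1.eigenvectorUnitary.2
  have hU2 : star U * U = 1 := (Matrix.mem_unitaryGroup_iff').mp hR.1.eigenvectorUnitary.2
  set D : Matrix (Fin n) (Fin n) ℂ := Matrix.diagonal ((↑) ∘ hR.1.eigenvalues) with hD
  set D' : Matrix (Fin n) (Fin n) ℂ :=
    Matrix.diagonal ((↑) ∘ Real.sqrt ∘ hR.1.eigenvalues) with hD'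
  have hsq : hR.sqrt = U * D' * star U := rfl
  have hspec : R = U * D * star U := hR.1.spectral_theorem
  set M : Matrix (Fin n) (Fin n) ℂ := star U * K * U with hM
  have cancel : ∀ X Y : Matrix (Fin n) (Fin n) ℂ,
      U * X * star U = U * Y * star U → X = Y := by
    intro X Y hXY
    have hX : star U * (U * X * star U) * U = X := by
      calc star U * (U * X * star U) * U = (star U * U) * X * (star U * U) := by noncomm_ring
        _ = X := by rw [hU2, one_mul, mul_one]
    have hY : star U * (U * Y * star U) * U = Y := by
      calc star U * (U * Y * star U) * U = (star U * U) * Y * (star U * U) := by noncomm_ring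
        _ = Y := by rw [hU2, one_mul, mul_one]
    rw [← hX, ← hY, hXY]
  have hKU : K * U = U * M := by
    rw [hM]
    calc K * U = (U * star U) * K * U := by rw [hU1, one_mul]
      _ = U * (star U * K * U) := by noncomm_ring
  have hUK : M * star U = star U * K := by
    rw [hM]
    calc star U * K * U * star U = star U * K * (U * star U) := by noncomm_ring
      _ = star U * K := by rw [hU1, mul_one]
  have hMD : M * D = D * M := by
    apply cancel
    calc U * (M * D) * star U = (U * M) * D * star U := by noncomm_ring
      _ = (K * U) * D * star U := by rw [hKU]
      _ = K * (U * D * star U) := by noncomm_ring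
      _ = R * K := by rw [← hspec, h]
      _ = (U * D * star U) * K := by rw [← hspec]
      _ = U * D * (star U * K) := by noncomm_ring
      _ = U * D * (M * star U) := by rw [hUK]
      _ = U * (D * M) * star U := by noncomm_ring
  have hMD' : M * D' = D' * M := by
    ext i j
    have hij := congrFun (congrFun hMD i) j
    simp only [hD, hD', Matrix.mul_diagonal, Matrix.diagonal_mul,
      Function.comp_apply] at hij ⊢
    rcases eq_or_ne (M i j) 0 with h0 | h0
    · simp [h0]
    · have heq : (hR.1.eigenvalues j : ℂ) = (hR.1.eigenvalues i : ℂ) :=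
        mul_left_cancel₀ h0 (by rw [hij, mul_comm])
      have heq' : hR.1.eigenvalues j = hR.1.eigenvalues i := by exact_mod_cast heq
      rw [heq', mul_comm]
  rw [hsq]
  calc K * (U * D' * star U) = (K * U) * D' * star U := by noncomm_ring
    _ = (U * M) * D' * star U := by rw [hKU]
    _ = U * (M * D') * star U := by noncomm_ring
    _ = U * (D' * M) * star U := by rw [hMD']
    _ = U * D' * (M * star U) := by noncomm_ring
    _ = U * D' * (star U * K) := by rw [hUK]
    _ = U * D' * star U * K := by noncomm_ring


/-- Let `A := c • O⁻¹ R⁻¹ O K O`, where `c = i t` is purely imaginary nonzero, `O` is an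
invertible real diagonal matrix, and `R`, `K` are commuting Hermitian positive definite
matrices. Then `A` is similar to `i` times a Hermitian matrix, and hence all eigenvalues
of `A` are purely imaginary. -/
theorem A_similar_to_i_hermitian_and_spectrum_imaginary
    {n : ℕ} (O R K : Matrix (Fin n) (Fin n) ℂ) (c : ℂ) (t : ℝ)
    (ht : t ≠ 0) (hc : c = Complex.I * t)
    (hdiag : O.IsDiag) (hreal : ∀ i, (O i i).im = 0) (hO : IsUnit O)
    (hR : R.PosDef) (hK : K.PosDef) (hcomm : R * K = K * R) :
    (∃ (Q H : Matrix (Fin n) (Fin n) ℂ), IsUnit Q ∧ H.IsHermitian ∧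
        Q * (c • (O⁻¹ * R⁻¹ * O * K * O)) * Q⁻¹ = Complex.I • H) ∧
      (∀ (μ : ℂ) (v : Fin n → ℂ), v ≠ 0 →
        (c • (O⁻¹ * R⁻¹ * O * K * O)).mulVec v = μ • v → μ.re = 0) := by
  classical
  set T : Matrix (Fin n) (Fin n) ℂ := hR.posSemidef.sqrt with hTdef
  set S : Matrix (Fin n) (Fin n) ℂ := hK.posSemidef.sqrt with hSdef
  have hTT : T * T = R := hR.posSemidef.sqrt_mul_self
  have hSS : S * S = K := hK.posSemidef.sqrt_mul_self
  -- units
  have hRu : IsUnit R := hR.isUnit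
  have hKu : IsUnit K := hK.isUnit
  have hTu : IsUnit T := by
    rw [Matrix.isUnit_iff_isUnit_det] at hRu ⊢
    rw [← hTT, Matrix.det_mul] at hRu
    exact isUnit_of_mul_isUnit_left hRu
  have hSu : IsUnit S := by
    rw [Matrix.isUnit_iff_isUnit_det] at hKu ⊢
    rw [← hSS, Matrix.det_mul] at hKu
    exact isUnit_of_mul_isUnit_left hKu
  have hOd : IsUnit O.det := (Matrix.isUnit_iff_isUnit_det O).mp hO
  have hTd : IsUnit T.det := (Matrix.isUnit_iff_isUnit_det T).mp hTu
  have hSd : IsUnit S.det := (Matrix.isUnit_iff_isUnit_det S).mp hSu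
  have hOO : O * O⁻¹ = 1 := Matrix.mul_nonsing_inv O hOd
  have hOO' : O⁻¹ * O = 1 := Matrix.nonsing_inv_mul O hOd
  have hTT' : T * T⁻¹ = 1 := Matrix.mul_nonsing_inv T hTd
  have hTT'' : T⁻¹ * T = 1 := Matrix.nonsing_inv_mul T hTd
  have hSS' : S * S⁻¹ = 1 := Matrix.mul_nonsing_inv S hSd
  -- K commutes with T and T⁻¹
  have hKT : K * T = T * K := commute_sqrt_of_commute hR.posSemidef hcomm.symm
  have hKTinv : K * T⁻¹ = T⁻¹ * K := by
    calc K * T⁻¹ = (T⁻¹ * T) * (K * T⁻¹) := by rw [hTT'', one_mul]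
      _ = T⁻¹ * (T * K) * T⁻¹ := by noncomm_ring
      _ = T⁻¹ * (K * T) * T⁻¹ := by rw [hKT]
      _ = T⁻¹ * K * (T * T⁻¹) := by noncomm_ring
      _ = T⁻¹ * K := by rw [hTT', mul_one]
  -- hermitian facts
  have hTh : Tᴴ = T := hR.posSemidef.posSemidef_sqrt.1
  have hSh : Sᴴ = S := hK.posSemidef.posSemidef_sqrt.1
  have hTih : (T⁻¹)ᴴ = T⁻¹ := by rw [Matrix.conjTranspose_nonsing_inv, hTh]
  have hOh : Oᴴ = O := by
    ext i j
    rcases eq_or_ne i j with rfl | hij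
    · simp only [Matrix.conjTranspose_apply]
      exact Complex.conj_eq_iff_im.mpr (hreal i)
    · simp only [Matrix.conjTranspose_apply, hdiag hij, hdiag (Ne.symm hij), star_zero]
  -- R⁻¹ = T⁻¹ * T⁻¹
  have hRinv : R⁻¹ = T⁻¹ * T⁻¹ := by rw [← hTT, Matrix.mul_inv_rev]
  set Q : Matrix (Fin n) (Fin n) ℂ := S * T * O with hQdef
  have hQu : IsUnit Q := (hSu.mul hTu).mul hO
  have hQinv : Q⁻¹ = O⁻¹ * T⁻¹ * S⁻¹ := by
    rw [hQdef, Matrix.mul_inv_rev, Matrix.mul_inv_rev, Matrix.mul_assoc]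
  set E : Matrix (Fin n) (Fin n) ℂ := S * T⁻¹ * O * T⁻¹ * S with hEdef
  have hconj : Q * (O⁻¹ * R⁻¹ * O * K * O) * Q⁻¹ = E := by
    rw [hQdef, hQinv, hRinv, hEdef]
    calc S * T * O * (O⁻¹ * (T⁻¹ * T⁻¹) * O * K * O) * (O⁻¹ * T⁻¹ * S⁻¹)
        = S * T * (O * O⁻¹) * (T⁻¹ * T⁻¹) * O * K * (O * O⁻¹) * T⁻¹ * S⁻¹ := by noncomm_ring
      _ = S * (T * T⁻¹) * T⁻¹ * O * (K * T⁻¹) * S⁻¹ := by rw [hOO]; noncomm_ring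
      _ = S * T⁻¹ * O * T⁻¹ * (K * S⁻¹) := by rw [hTT', hKTinv]; noncomm_ring
      _ = S * T⁻¹ * O * T⁻¹ * (S * (S * S⁻¹)) := by rw [← hSS]; noncomm_ring
      _ = S * T⁻¹ * O * T⁻¹ * S := by rw [hSS', mul_one]
  have hEh : Eᴴ = E := by
    rw [hEdef]
    simp only [Matrix.conjTranspose_mul, hTih, hSh, hOh, Matrix.mul_assoc]
  set H : Matrix (Fin n) (Fin n) ℂ := (t : ℂ) • E with hHdef
  have hHh : H.IsHermitian := by
    rw [Matrix.IsHermitian, hHdef, Matrix.conjTranspose_smul, hEh, Complex.star_def,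
      Complex.conj_ofReal]
  have hmain : Q * (c • (O⁻¹ * R⁻¹ * O * K * O)) * Q⁻¹ = Complex.I • H := by
    rw [Matrix.mul_smul, Matrix.smul_mul, hconj, hHdef, smul_smul, hc]
  refine ⟨⟨Q, H, hQu, hHh, hmain⟩, ?_⟩
  intro μ v hv heig
  set w : Fin n → ℂ := Q.mulVec v with hwdef
  have hw : w ≠ 0 := by
    intro h0
    apply hv
    have hinj := Matrix.mulVec_injective_iff_isUnit.mpr hQu
    apply hinj
    rw [← hwdef, h0, Matrix.mulVec_zero]
  have hQQ : Q⁻¹ * Q = 1 := Matrix.nonsing_inv_mul Q ((Matrix.isUnit_iff_isUnit_det Q).mp hQu)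
  have key : Complex.I • H.mulVec w = μ • w := by
    have h1 : (Q * (c • (O⁻¹ * R⁻¹ * O * K * O))) = (Complex.I • H) * Q := by
      calc Q * (c • (O⁻¹ * R⁻¹ * O * K * O))
          = Q * (c • (O⁻¹ * R⁻¹ * O * K * O)) * (Q⁻¹ * Q) := by rw [hQQ, mul_one]
        _ = (Q * (c • (O⁻¹ * R⁻¹ * O * K * O)) * Q⁻¹) * Q := by noncomm_ring
        _ = (Complex.I • H) * Q := by rw [hmain]
    have h2 := congrArg (fun M => Matrix.mulVec M v) h1
    simp only [← Matrix.mulVec_mulVec] at h2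
    rw [heig, Matrix.mulVec_smul, ← hwdef] at h2
    rw [← Matrix.smul_mulVec]
    exact h2.symm
  have hdot := congrArg (fun u => dotProduct (star w) u) key
  simp only [dotProduct_smul] at hdot
  set a : ℂ := dotProduct (star w) w with hadef
  set b : ℂ := dotProduct (star w) (H.mulVec w) with hbdef
  have ha : 0 < a := Matrix.dotProduct_star_self_pos_iff.mpr hw
  have haim : a.im = 0 := by
    have := (Complex.lt_def.mp ha).2
    simpa using this.symm
  have hare : 0 < a.re := (Complex.lt_def.mp ha).1
  have hb : (starRingEnd ℂ) b = b := by
    rw [hbdef]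
    calc (starRingEnd ℂ) (dotProduct (star w) (H.mulVec w))
        = star (dotProduct (star w) (H.mulVec w)) := rfl
      _ = dotProduct (star (H.mulVec w)) w := (Matrix.star_dotProduct _ _).symm
      _ = dotProduct (Matrix.vecMul (star w) Hᴴ) w := by rw [Matrix.star_mulVec]
      _ = dotProduct (star w) (Hᴴ.mulVec w) := (Matrix.dotProduct_mulVec _ _ _).symm
      _ = dotProduct (star w) (H.mulVec w) := by rw [hHh.eq]
  have hbim : b.im = 0 := by
    have := congrArg Complex.im hb
    simp only [Complex.conj_im] at this
    linarith
  have heq : Complex.I * b = μ * a := by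
    rw [hbdef, hadef] at *
    simpa [smul_eq_mul] using hdot
  have hre := congrArg Complex.re heq
  simp only [Complex.mul_re, Complex.I_re, Complex.I_im, haim, hbim] at hre
  have : μ.re * a.re = 0 := by linarith
  rcases mul_eq_zero.mp this with h | h
  · exact h
  · exact absurd h (ne_of_gt hare)
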